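/- If Pr(S) = C_n·exp(n f(m_s)) is a probability distribution on {0,1}ⁿ depending only on the magnetization m_s = (1/n)∑ Sᵢ, with f continuous on [0,1], then lim_{n→∞} −(1/n) log C_n = max_{m∈[0,1]} [H₂(m) + f(m)]. -/

import Mathlib

open Real Filter

/-- Binary entropy in nats. -/
noncomputable def binEnt (m : ℝ) : ℝ := -(m * Real.log m) - (1 - m) * Real.log (1 - m)


private def bterm (n k j : ℕ) : ℕ := n.choose j * (k ^ j * (n - k) ^ (n - j))

private lemma bterm_sum (n k : ℕ) (hk : k ≤ n) :
    ∑ j ∈ Finset.range (n + 1), bterm n k j = n ^ n := by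
  have h := add_pow (R := ℕ) k (n - k) n
  rw [Nat.add_sub_cancel' hk] at h
  rw [h]
  exact Finset.sum_congr rfl fun j hj => by simp [bterm]; ring

private lemma bterm_rel (n k j : ℕ) (hj : j < n) :
    bterm n k (j + 1) * ((j + 1) * (n - k)) = bterm n k j * ((n - j) * k) := by
  unfold bterm
  have h1 : n.choose (j+1) * (j+1) = n.choose j * (n - j) := Nat.choose_succ_right_eq n j
  have h2 : (n - k) ^ (n - (j+1)) * (n - k) = (n - k) ^ (n - j) := by
    rw [← pow_succ]; congr 1; omega
  calc n.choose (j+1) * (k ^ (j+1) * (n-k)^(n-(j+1))) * ((j+1) * (n-k))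
      = (n.choose (j+1) * (j+1)) * (k^j * k * ((n-k)^(n-(j+1)) * (n-k))) := by ring
    _ = (n.choose j * (n - j)) * (k^j * k * (n-k)^(n-j)) := by rw [h1, h2]
    _ = n.choose j * (k ^ j * (n-k)^(n-j)) * ((n - j) * k) := by ring

private lemma chain_up {t : ℕ → ℕ} {k : ℕ} (h : ∀ i, i < k → t i ≤ t (i + 1)) :
    ∀ j, j ≤ k → t j ≤ t k := by
  intro j hj
  have : ∀ m, j ≤ m → m ≤ k → t j ≤ t m := by
    intro m hm
    induction m, hm using Nat.le_induction with
    | base => intro _; exact le_refl _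
    | succ m hm ih => intro hmk; exact (ih (by omega)).trans (h m (by omega))
  exact this k hj le_rfl

private lemma chain_down {t : ℕ → ℕ} {k n : ℕ} (h : ∀ i, k ≤ i → i < n → t (i + 1) ≤ t i) :
    ∀ j, k ≤ j → j ≤ n → t j ≤ t k := by
  intro j hkj
  induction j, hkj using Nat.le_induction with
  | base => intro _; exact le_refl _
  | succ m hm ih => intro hmk; exact (h m hm (by omega)).trans (ih (by omega))

private lemma bterm_le_max (n k : ℕ) (hk : k ≤ n) :
    ∀ j, j ≤ n → bterm n k j ≤ bterm n k k := by
  rcases eq_or_lt_of_le hk with rfl | hkn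
  · intro j hj
    rcases eq_or_lt_of_le hj with rfl | hjn
    · exact le_refl _
    · simp [bterm, Nat.sub_self, zero_pow (show k - j ≠ 0 by omega)]
  · have hA : ∀ j : ℕ, 0 < (j + 1) * (n - k) :=
      fun j => Nat.mul_pos (Nat.succ_pos j) (by omega)
    have up : ∀ i, i < k → bterm n k i ≤ bterm n k (i + 1) := by
      intro i hik
      have hrel := bterm_rel n k i (by omega)
      have hAB : (i + 1) * (n - k) ≤ (n - i) * k :=
        Nat.mul_le_mul (by omega) (by omega) |>.trans_eq (Nat.mul_comm _ _)
      have : bterm n k i * ((i + 1) * (n - k)) ≤ bterm n k (i + 1) * ((i + 1) * (n - k)) := by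
        rw [hrel]
        exact Nat.mul_le_mul_left _ hAB
      exact Nat.le_of_mul_le_mul_right this (hA i)
    have down : ∀ i, k ≤ i → i < n → bterm n k (i + 1) ≤ bterm n k i := by
      intro i hki hin
      have hrel := bterm_rel n k i hin
      have hBA : (n - i) * k ≤ (i + 1) * (n - k) :=
        (Nat.mul_le_mul (show n - i ≤ n - k by omega) (by omega)).trans_eq
          (Nat.mul_comm _ _) |>.trans_eq rfl
      have : bterm n k (i + 1) * ((i + 1) * (n - k)) ≤ bterm n k i * ((i + 1) * (n - k)) := by
        rw [hrel]
        exact Nat.mul_le_mul_left _ hBA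
      exact Nat.le_of_mul_le_mul_right this (hA i)
    intro j hj
    rcases le_or_gt j k with hjk | hkj
    · exact chain_up up j hjk
    · exact chain_down down j hkj.le hj


private lemma exp_nat_log (k : ℕ) : Real.exp (k * Real.log k) = (k : ℝ) ^ k := by
  cases k with
  | zero => simp
  | succ m =>
    rw [← Real.log_pow, Real.exp_log (by positivity)]

private lemma mul_log_div (a : ℕ) (b : ℝ) (hb : b ≠ 0) :
    (a : ℝ) * Real.log (a / b) = a * Real.log a - a * Real.log b := by
  cases a with
  | zero => simp
  | succ m =>
    rw [Real.log_div (by exact_mod_cast Nat.succ_ne_zero m) hb]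
    ring

private lemma exp_binEnt (n k : ℕ) (hn : 0 < n) (hk : k ≤ n) :
    Real.exp (n * binEnt (k / n)) =
      (n : ℝ) ^ n / ((k : ℝ) ^ k * ((n - k : ℕ) : ℝ) ^ (n - k)) := by
  have hn' : (n : ℝ) ≠ 0 := Nat.cast_ne_zero.mpr hn.ne'
  have hcast : ((n - k : ℕ) : ℝ) = (n : ℝ) - k := by
    exact Nat.cast_sub hk
  have e1 : (1 : ℝ) - (k : ℝ) / n = ((n - k : ℕ) : ℝ) / n := by
    rw [hcast]; field_simp
  have key : (n : ℝ) * binEnt ((k : ℝ) / n) =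
      (n : ℝ) * Real.log n - (k : ℝ) * Real.log k
        - ((n - k : ℕ) : ℝ) * Real.log ((n - k : ℕ) : ℝ) := by
    have h0 : (n : ℝ) * binEnt ((k : ℝ) / n) =
        -((k : ℝ) * Real.log ((k : ℝ) / n))
          - ((n - k : ℕ) : ℝ) * Real.log (((n - k : ℕ) : ℝ) / n) := by
      rw [binEnt, e1]
      field_simp
    rw [h0, mul_log_div k n hn', mul_log_div (n - k) n hn']
    have hsum : (k : ℝ) + ((n - k : ℕ) : ℝ) = (n : ℝ) := by rw [hcast]; ring
    linear_combination Real.log n * hsum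
  rw [key, Real.exp_sub, Real.exp_sub, exp_nat_log, exp_nat_log, exp_nat_log, div_div]

private lemma pow_self_pos (k : ℕ) : 0 < k ^ k := by
  rcases Nat.eq_zero_or_pos k with rfl | h
  · simp
  · exact pow_pos h _

private lemma choose_le_exp (n k : ℕ) (hn : 0 < n) (hk : k ≤ n) :
    (n.choose k : ℝ) ≤ Real.exp (n * binEnt (k / n)) := by
  have hb : bterm n k k ≤ n ^ n := by
    rw [← bterm_sum n k hk]
    exact Finset.single_le_sum (fun j _ => Nat.zero_le _)
      (Finset.mem_range.mpr (by omega))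
  have hpos : (0 : ℝ) < (k : ℝ) ^ k * ((n - k : ℕ) : ℝ) ^ (n - k) := by
    have h : (0 : ℕ) < k ^ k * (n - k) ^ (n - k) :=
      Nat.mul_pos (pow_self_pos k) (pow_self_pos (n - k))
    exact_mod_cast h
  rw [exp_binEnt n k hn hk, le_div_iff₀ hpos]
  have := hb
  unfold bterm at this
  exact_mod_cast this

private lemma exp_le_choose (n k : ℕ) (hn : 0 < n) (hk : k ≤ n) :
    Real.exp (n * binEnt (k / n)) ≤ (n + 1) * (n.choose k : ℝ) := by
  have hb : n ^ n ≤ (n + 1) * bterm n k k := by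
    rw [← bterm_sum n k hk]
    have := Finset.sum_le_card_nsmul (Finset.range (n + 1)) (bterm n k)
      (bterm n k k) (fun j hj => bterm_le_max n k hk j (by
        have := Finset.mem_range.mp hj; omega))
    simpa [Finset.card_range, smul_eq_mul] using this
  have hpos : (0 : ℝ) < (k : ℝ) ^ k * ((n - k : ℕ) : ℝ) ^ (n - k) := by
    have h : (0 : ℕ) < k ^ k * (n - k) ^ (n - k) :=
      Nat.mul_pos (pow_self_pos k) (pow_self_pos (n - k))
    exact_mod_cast h
  rw [exp_binEnt n k hn hk, div_le_iff₀ hpos]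
  unfold bterm at hb
  have hb' : ((n : ℝ)) ^ n ≤ (n + 1) * (n.choose k * ((k : ℝ) ^ k * ((n - k : ℕ) : ℝ) ^ (n - k))) := by
    exact_mod_cast hb
  linarith


private lemma card_fiber (n k : ℕ) :
    (Finset.univ.filter fun s : Fin n → Bool =>
      (Finset.univ.filter fun i => s i = true).card = k).card = n.choose k := by
  have h1 : n.choose k = (Finset.powersetCard k (Finset.univ : Finset (Fin n))).card := by
    rw [Finset.card_powersetCard, Finset.card_univ, Fintype.card_fin]
  rw [h1]
  apply Finset.card_nbij' (fun s => Finset.univ.filter fun i => s i = true)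
    (fun t => fun i => decide (i ∈ t))
  · intro s hs
    simp only [Finset.mem_coe, Finset.mem_filter, Finset.mem_univ, true_and] at hs
    exact Finset.mem_powersetCard.mpr ⟨Finset.subset_univ _, hs⟩
  · intro t ht
    simp only [Finset.mem_coe, Finset.mem_filter, Finset.mem_univ, true_and]
    rw [Finset.mem_coe, Finset.mem_powersetCard] at ht
    simp only [decide_eq_true_eq]
    rw [Finset.filter_univ_mem]
    exact ht.2
  · intro s _
    funext i
    simp
  · intro t _
    simp [Finset.filter_univ_mem]

private lemma Z_group (n : ℕ) (F : ℕ → ℝ) :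
    (∑ s : Fin n → Bool, F (Finset.univ.filter fun i => s i = true).card)
      = ∑ k ∈ Finset.range (n + 1), (n.choose k : ℝ) * F k := by
  have hmap : ∀ s : Fin n → Bool, s ∈ Finset.univ →
      (Finset.univ.filter fun i => s i = true).card ∈ Finset.range (n + 1) := by
    intro s _
    refine Finset.mem_range.mpr ?_
    have : (Finset.univ.filter fun i => s i = true).card ≤ n := by
      simpa using Finset.card_filter_le Finset.univ (fun i => s i = true)
    omega
  rw [← Finset.sum_fiberwise_of_maps_to' hmap F]
  apply Finset.sum_congr rfl
  intro k _
  rw [Finset.sum_const, card_fiber, nsmul_eq_mul]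

private lemma tendsto_log_succ_div : Tendsto (fun n : ℕ => Real.log (n + 1) / n) atTop (nhds 0) := by
  have h1 : Tendsto (fun x : ℝ => Real.log x / x) atTop (nhds 0) :=
    Real.isLittleO_log_id_atTop.tendsto_div_nhds_zero
  have h2 : Tendsto (fun n : ℕ => (n : ℝ) + 1) atTop atTop :=
    tendsto_atTop_add_const_right atTop 1 tendsto_natCast_atTop_atTop
  have h3 := h1.comp h2
  have h4 : Tendsto (fun n : ℕ => ((n : ℝ) + 1) / n) atTop (nhds 1) := by
    have h5 : Tendsto (fun n : ℕ => 1 + 1 / (n : ℝ)) atTop (nhds 1) := by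
      simpa using tendsto_const_nhds.add (tendsto_one_div_atTop_nhds_zero_nat (𝕜 := ℝ))
    apply h5.congr'
    filter_upwards [eventually_ge_atTop 1] with n hn
    have hn' : (n : ℝ) ≠ 0 := Nat.cast_ne_zero.mpr (by omega)
    field_simp
  have h6 := h3.mul h4
  rw [zero_mul] at h6
  · apply h6.congr'
    filter_upwards [eventually_ge_atTop 1] with n hn
    have hn' : (n : ℝ) ≠ 0 := Nat.cast_ne_zero.mpr (by omega)
    have hn1 : (n : ℝ) + 1 ≠ 0 := by positivity
    show Real.log ((n : ℝ) + 1) / ((n : ℝ) + 1) * (((n : ℝ) + 1) / n) = _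
    field_simp

/-- If Pr(S) = C_n exp(n f(m_s)) on {0,1}ⁿ, with C_n the normalization constant
and f continuous on [0,1], then −(1/n) log C_n → max_{m∈[0,1]}[H₂(m)+f(m)]. -/
theorem stmt3 (f : ℝ → ℝ) (hf : ContinuousOn f (Set.Icc 0 1))
    (C : ℕ → ℝ)
    (hC : ∀ n : ℕ, C n =
      (∑ s : Fin n → Bool,
        Real.exp (n * f ((∑ i, if s i then (1:ℝ) else 0) / (n : ℝ))))⁻¹) :
    Tendsto (fun n : ℕ => -(1 / (n : ℝ)) * Real.log (C n)) atTop
      (nhds (sSup ((fun m => binEnt m + f m) '' Set.Icc 0 1))) := by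
  have hbc : Continuous binEnt := by
    have h1 : Continuous fun m : ℝ => m * Real.log m := Real.continuous_mul_log
    have h2 : Continuous fun m : ℝ => (1 - m) * Real.log (1 - m) :=
      h1.comp (continuous_const.sub continuous_id)
    exact h1.neg.sub h2
  set g : ℝ → ℝ := fun m => binEnt m + f m with hgdef
  have hg : ContinuousOn g (Set.Icc 0 1) := (hbc.continuousOn).add hf
  set M : ℝ := sSup (g '' Set.Icc 0 1) with hMdef
  have hbdd : BddAbove (g '' Set.Icc 0 1) :=
    (isCompact_Icc.image_of_continuousOn hg).bddAbove
  obtain ⟨x, hx, hMx⟩ :=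
    isCompact_Icc.exists_sSup_image_eq (Set.nonempty_Icc.mpr zero_le_one) hg
  -- Z and its positivity
  set Z : ℕ → ℝ := fun n => ∑ s : Fin n → Bool,
      Real.exp (n * f ((∑ i, if s i then (1:ℝ) else 0) / (n : ℝ))) with hZdef
  have hZpos : ∀ n, 0 < Z n := fun n =>
    Finset.sum_pos (fun s _ => Real.exp_pos _) Finset.univ_nonempty
  -- grouping
  have hZeq : ∀ n, Z n = ∑ k ∈ Finset.range (n + 1),
      (n.choose k : ℝ) * Real.exp (n * f (k / n)) := by
    intro n
    rw [hZdef]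
    rw [← Z_group n (fun k => Real.exp (n * f (k / n)))]
    apply Finset.sum_congr rfl
    intro s _
    congr 2
    rw [Finset.sum_boole]
  -- maximizer sequence
  set K : ℕ → ℕ := fun n => ⌊(n : ℝ) * x⌋₊ with hKdef
  have hx0 : (0:ℝ) ≤ x := hx.1
  have hx1 : x ≤ 1 := hx.2
  have hKle : ∀ n, K n ≤ n := by
    intro n
    have : (n : ℝ) * x ≤ (n : ℝ) := by nlinarith [Nat.cast_nonneg (α := ℝ) n]
    calc K n ≤ ⌊(n : ℝ)⌋₊ := Nat.floor_le_floor this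
      _ = n := Nat.floor_natCast n
  have hKmem : ∀ n : ℕ, ((K n : ℝ) / n) ∈ Set.Icc (0:ℝ) 1 := by
    intro n
    rcases Nat.eq_zero_or_pos n with rfl | hn
    · simp
    · constructor
      · positivity
      · rw [div_le_one (by exact_mod_cast hn)]
        exact_mod_cast hKle n
  -- upper bound
  have hub : ∀ n : ℕ, 1 ≤ n →
      (1 / (n:ℝ)) * Real.log (Z n) ≤ M + Real.log (n + 1) / n := by
    intro n hn
    have hn0 : (0:ℝ) < n := by exact_mod_cast hn
    have hterm : ∀ k ∈ Finset.range (n + 1),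
        (n.choose k : ℝ) * Real.exp (n * f (k / n)) ≤ Real.exp (n * M) := by
      intro k hk
      have hkn : k ≤ n := by have := Finset.mem_range.mp hk; omega
      have h1 : (n.choose k : ℝ) * Real.exp (n * f (k / n)) ≤
          Real.exp (n * binEnt (k / n)) * Real.exp (n * f (k / n)) :=
        mul_le_mul_of_nonneg_right (choose_le_exp n k (by omega) hkn) (Real.exp_pos _).le
      have hmem : ((k:ℝ)/n) ∈ Set.Icc (0:ℝ) 1 := by
        constructor
        · positivity
        · rw [div_le_one hn0]; exact_mod_cast hkn
      have hgle : g ((k:ℝ)/n) ≤ M := le_csSup hbdd ⟨_, hmem, rfl⟩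
      have h2 : Real.exp (n * binEnt (k / n)) * Real.exp (n * f (k / n)) =
          Real.exp (n * g ((k:ℝ)/n)) := by
        rw [← Real.exp_add, hgdef]; ring_nf
      have h3 : Real.exp (n * g ((k:ℝ)/n)) ≤ Real.exp (n * M) :=
        Real.exp_le_exp.mpr (mul_le_mul_of_nonneg_left hgle hn0.le)
      calc (n.choose k : ℝ) * Real.exp (n * f (k / n)) ≤ _ := h1
        _ = _ := h2
        _ ≤ _ := h3
    have hZub : Z n ≤ (n + 1) * Real.exp (n * M) := by
      rw [hZeq n]
      have := Finset.sum_le_card_nsmul (Finset.range (n + 1)) _ _ hterm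
      simpa [Finset.card_range, nsmul_eq_mul] using this
    have hlog : Real.log (Z n) ≤ Real.log (n + 1) + n * M := by
      have h4 : Real.log (Z n) ≤ Real.log ((n + 1) * Real.exp (n * M)) :=
        Real.log_le_log (hZpos n) hZub
      rwa [Real.log_mul (by positivity) (Real.exp_ne_zero _), Real.log_exp] at h4
    have h6 : (1/(n:ℝ)) * Real.log (Z n) ≤ (1/(n:ℝ)) * (Real.log (n+1) + n * M) :=
      mul_le_mul_of_nonneg_left hlog (by positivity)
    have h7 : (1/(n:ℝ)) * (Real.log (n+1) + n * M) = M + Real.log (n+1) / n := by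
      field_simp
      ring
    linarith
  -- lower bound
  have hlb : ∀ n : ℕ, 1 ≤ n →
      g ((K n : ℝ) / n) - Real.log (n + 1) / n ≤ (1 / (n:ℝ)) * Real.log (Z n) := by
    intro n hn
    have hn0 : (0:ℝ) < n := by exact_mod_cast hn
    have h1 : Real.exp (n * g ((K n : ℝ)/n)) ≤ (n + 1) * Z n := by
      have h2 : Real.exp (n * g ((K n : ℝ)/n)) =
          Real.exp (n * binEnt ((K n : ℝ) / n)) * Real.exp (n * f ((K n : ℝ) / n)) := by
        rw [← Real.exp_add, hgdef]; ring_nf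
      have h3 : Real.exp (n * binEnt ((K n : ℝ) / n)) ≤ (n + 1) * (n.choose (K n) : ℝ) :=
        exp_le_choose n (K n) (by omega) (hKle n)
      have h4 : (n.choose (K n) : ℝ) * Real.exp (n * f ((K n : ℝ) / n)) ≤ Z n := by
        rw [hZeq n]
        exact Finset.single_le_sum
          (f := fun k => (n.choose k : ℝ) * Real.exp (n * f (k / n)))
          (fun k _ => by positivity)
          (Finset.mem_range.mpr (by have := hKle n; omega))
      calc Real.exp (n * g ((K n : ℝ)/n))
          = Real.exp (n * binEnt ((K n : ℝ) / n)) * Real.exp (n * f ((K n : ℝ) / n)) := h2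
        _ ≤ ((n + 1) * (n.choose (K n) : ℝ)) * Real.exp (n * f ((K n : ℝ) / n)) :=
            mul_le_mul_of_nonneg_right h3 (Real.exp_pos _).le
        _ = (n + 1) * ((n.choose (K n) : ℝ) * Real.exp (n * f ((K n : ℝ) / n))) := by ring
        _ ≤ (n + 1) * Z n := by
            apply mul_le_mul_of_nonneg_left h4 (by positivity)
    have h5 : (n:ℝ) * g ((K n : ℝ)/n) ≤ Real.log (n + 1) + Real.log (Z n) := by
      have := Real.log_le_log (Real.exp_pos _) h1
      rwa [Real.log_exp, Real.log_mul (by positivity) (hZpos n).ne'] at this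
    rw [sub_le_iff_le_add]
    calc g ((K n : ℝ)/n) = ((n:ℝ) * g ((K n : ℝ)/n)) / n := by field_simp
      _ ≤ (Real.log (n + 1) + Real.log (Z n)) / n := by gcongr
      _ = 1 / n * Real.log (Z n) + Real.log (n + 1) / n := by field_simp; ring
  -- limit of K n / n
  have hKlim : Tendsto (fun n : ℕ => (K n : ℝ) / n) atTop (nhds x) := by
    apply tendsto_of_tendsto_of_tendsto_of_le_of_le'
      (g := fun n : ℕ => x - 1 / n) (h := fun _ : ℕ => x)
      (by simpa using tendsto_const_nhds.sub (tendsto_one_div_atTop_nhds_zero_nat (𝕜 := ℝ)))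
      tendsto_const_nhds
    · filter_upwards [eventually_ge_atTop 1] with n hn
      have hn0 : (0:ℝ) < n := by exact_mod_cast hn
      have := Nat.sub_one_lt_floor ((n:ℝ) * x)
      rw [sub_le_iff_le_add, ← add_div, le_div_iff₀ hn0]
      nlinarith [this]
    · filter_upwards [eventually_ge_atTop 1] with n hn
      have hn0 : (0:ℝ) < n := by exact_mod_cast hn
      rw [div_le_iff₀ hn0]
      have := Nat.floor_le (show (0:ℝ) ≤ (n:ℝ) * x by positivity)
      linarith [this]
  have hglim : Tendsto (fun n : ℕ => g ((K n : ℝ) / n)) atTop (nhds (g x)) := by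
    have hc : ContinuousWithinAt g (Set.Icc 0 1) x := hg x hx
    exact hc.tendsto.comp (tendsto_nhdsWithin_iff.mpr
      ⟨hKlim, Eventually.of_forall hKmem⟩)
  -- squeeze
  have hmain : Tendsto (fun n : ℕ => (1 / (n:ℝ)) * Real.log (Z n)) atTop (nhds M) := by
    apply tendsto_of_tendsto_of_tendsto_of_le_of_le'
      (g := fun n : ℕ => g ((K n : ℝ) / n) - Real.log (n + 1) / n)
      (h := fun n : ℕ => M + Real.log (n + 1) / n)
    · have := hglim.sub tendsto_log_succ_div
      rw [sub_zero, ← hMx] at this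
      exact this
    · simpa using tendsto_const_nhds.add tendsto_log_succ_div
    · filter_upwards [eventually_ge_atTop 1] with n hn
      exact hlb n hn
    · filter_upwards [eventually_ge_atTop 1] with n hn
      exact hub n hn
  refine hmain.congr fun n => ?_
  rw [hC n, Real.log_inv]
  show 1 / (n:ℝ) * Real.log (Z n) = -(1 / (n:ℝ)) * -Real.log (Z n)
  ring
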